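/- Let H_r = (r²−1)I + D − rA for a finite graph, fix r_t > 1, and let X ∈ ℝ^{n×p} have orthonormal columns consisting of eigenvectors of H_{r_t} for its p smallest eigenvalues, with S = diag of those eigenvalues. Then for every r' ∈ ℝ, the p-th smallest eigenvalue of H_{r'} satisfies r_t · s_p^↑(H_{r'}) ≤ (r' − r_t)(1 + r' r_t) + λ_max( (r_t − r') XᵀDX + r' S ). -/

import Mathlib

open Matrix

/-- Ascending list of eigenvalues (with multiplicity) of a Hermitian real matrix. -/
noncomputable def sortEig {n : ℕ} {M : Matrix (Fin n) (Fin n) ℝ} (hM : M.IsHermitian) :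
    Fin n → ℝ :=
  fun i => hM.eigenvalues (Tuple.sort hM.eigenvalues i)

/-- The largest (real) eigenvalue of a matrix, as the supremum of its set of real
eigenvalues. For a symmetric matrix this is `λ_max`. -/
noncomputable def lambdaMax {m : ℕ} (M : Matrix (Fin m) (Fin m) ℝ) : ℝ :=
  sSup {t : ℝ | ∃ x : Fin m → ℝ, x ≠ 0 ∧ M *ᵥ x = t • x}

lemma dot_tmul {k l : ℕ} (N : Matrix (Fin k) (Fin l) ℝ) (a : Fin k → ℝ) (b : Fin l → ℝ) :
    a ⬝ᵥ (N *ᵥ b) = (Nᵀ *ᵥ a) ⬝ᵥ b := by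
  rw [dotProduct_mulVec, mulVec_transpose]

lemma dot_self_pos {k : ℕ} {x : Fin k → ℝ} (hx : x ≠ 0) : 0 < x ⬝ᵥ x :=
  lt_of_le_of_ne (Finset.sum_nonneg fun _ _ => mul_self_nonneg _)
    (fun h => hx (dotProduct_self_eq_zero.mp h.symm))

lemma rayleigh_le_sup {m : ℕ} (hm : 0 < m) {M : Matrix (Fin m) (Fin m) ℝ}
    (hM : M.IsHermitian) (z : Fin m → ℝ) :
    z ⬝ᵥ (M *ᵥ z) ≤ (Finset.univ.sup' (Finset.univ_nonempty_iff.mpr ⟨⟨0, hm⟩⟩) hM.eigenvalues)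
      * (z ⬝ᵥ z) := by
  set U := (hM.eigenvectorUnitary : Matrix (Fin m) (Fin m) ℝ) with hU
  have h2 : star U = Uᵀ := by ext i j; simp [Matrix.star_apply]
  have hUtU : Uᵀ * U = 1 := by rw [← h2]; exact (Unitary.mem_iff.mp hM.eigenvectorUnitary.2).1
  have hUUt : U * Uᵀ = 1 := by rw [← h2]; exact (Unitary.mem_iff.mp hM.eigenvectorUnitary.2).2
  have hspec : M = U * diagonal hM.eigenvalues * Uᵀ := by
    have h := hM.spectral_theorem; rw [Unitary.conjStarAlgAut_apply, ← hU, h2] at h; simpa using h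
  set y := Uᵀ *ᵥ z with hy
  have h1 : z ⬝ᵥ (M *ᵥ z) = ∑ i, hM.eigenvalues i * (y i * y i) := by
    conv_lhs => rw [hspec, ← mulVec_mulVec, ← mulVec_mulVec, dot_tmul]
    rw [← hy]
    simp [dotProduct, mulVec_diagonal]
    exact Finset.sum_congr rfl fun i _ => by ring
  have h3 : z ⬝ᵥ z = ∑ i, y i * y i := by
    conv_lhs => rw [show z ⬝ᵥ z = z ⬝ᵥ ((U * Uᵀ) *ᵥ z) by rw [hUUt, one_mulVec],
      ← mulVec_mulVec, dot_tmul]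
    rfl
  rw [h1, h3, Finset.mul_sum]
  exact Finset.sum_le_sum fun i _ => mul_le_mul_of_nonneg_right
    (Finset.le_sup' _ (Finset.mem_univ i)) (mul_self_nonneg _)

lemma rayleigh_le_lambdaMax {m : ℕ} (hm : 0 < m) {M : Matrix (Fin m) (Fin m) ℝ}
    (hM : M.IsHermitian) (z : Fin m → ℝ) :
    z ⬝ᵥ (M *ᵥ z) ≤ lambdaMax M * (z ⬝ᵥ z) := by
  set μ := Finset.univ.sup' (Finset.univ_nonempty_iff.mpr ⟨⟨0, hm⟩⟩) hM.eigenvalues with hμ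
  have hub : ∀ t ∈ {t : ℝ | ∃ x : Fin m → ℝ, x ≠ 0 ∧ M *ᵥ x = t • x}, t ≤ μ := by
    rintro t ⟨x, hx0, hx⟩
    have h1 : t * (x ⬝ᵥ x) ≤ μ * (x ⬝ᵥ x) := by
      have := rayleigh_le_sup hm hM x
      rwa [hx, dotProduct_smul, smul_eq_mul] at this
    exact le_of_mul_le_mul_right (by linarith [h1]) (dot_self_pos hx0)
  have hmem : μ ∈ {t : ℝ | ∃ x : Fin m → ℝ, x ≠ 0 ∧ M *ᵥ x = t • x} := by
    obtain ⟨i, _, hi⟩ := Finset.exists_mem_eq_sup' (Finset.univ_nonempty_iff.mpr ⟨⟨0, hm⟩⟩)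
      hM.eigenvalues
    refine ⟨⇑(hM.eigenvectorBasis i), ?_, by rw [hμ, hi]; exact hM.mulVec_eigenvectorBasis i⟩
    intro h0
    have h1 := hM.eigenvectorBasis.orthonormal.1 i
    rw [show hM.eigenvectorBasis i = 0 from PiLp.ext fun j => congrFun h0 j] at h1
    simp at h1
  have hle : μ ≤ lambdaMax M := le_csSup ⟨μ, hub⟩ hmem
  calc z ⬝ᵥ (M *ᵥ z) ≤ μ * (z ⬝ᵥ z) := rayleigh_le_sup hm hM z
    _ ≤ lambdaMax M * (z ⬝ᵥ z) :=
        mul_le_mul_of_nonneg_right hle (Finset.sum_nonneg fun _ _ => mul_self_nonneg _)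

lemma sum_dot {ι : Type*} [Fintype ι] {k : ℕ} (c : ι → ℝ) (v : ι → Fin k → ℝ) (w : Fin k → ℝ) :
    (∑ i, c i • v i) ⬝ᵥ w = ∑ i, c i * (v i ⬝ᵥ w) := by
  simp only [dotProduct, Finset.sum_apply, Pi.smul_apply, smul_eq_mul, Finset.sum_mul,
    Finset.mul_sum]
  rw [Finset.sum_comm]
  exact Finset.sum_congr rfl fun i _ => Finset.sum_congr rfl fun j _ => by ring

lemma dot_sum {ι : Type*} [Fintype ι] {k : ℕ} (c : ι → ℝ) (v : ι → Fin k → ℝ) (w : Fin k → ℝ) :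
    w ⬝ᵥ (∑ i, c i • v i) = ∑ i, c i * (w ⬝ᵥ v i) := by
  simp only [dotProduct, Finset.sum_apply, Pi.smul_apply, smul_eq_mul, Finset.sum_mul,
    Finset.mul_sum]
  rw [Finset.sum_comm]
  exact Finset.sum_congr rfl fun i _ => Finset.sum_congr rfl fun j _ => by ring

lemma mulVec_sum' {ι : Type*} [Fintype ι] {k : ℕ} (B : Matrix (Fin k) (Fin k) ℝ)
    (c : ι → ℝ) (v : ι → Fin k → ℝ) :
    B *ᵥ (∑ i, c i • v i) = ∑ i, c i • (B *ᵥ v i) := by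
  ext j
  simp only [mulVec, dotProduct, Finset.sum_apply, Pi.smul_apply, smul_eq_mul, Finset.mul_sum]
  rw [Finset.sum_comm]
  exact Finset.sum_congr rfl fun i _ => Finset.sum_congr rfl fun l _ => by ring

/-- Courant–Fischer bound. If the columns of `X` are orthonormal
eigenvectors of `H_{r_t}` for its `p` smallest eigenvalues (with `S` the diagonal of
those eigenvalues), then for every `r'`,
`r_t · s_p^↑(H_{r'}) ≤ (r'−r_t)(1+r'r_t) + λ_max((r_t−r') XᵀDX + r' S)`. -/
theorem stmt11 {n : ℕ} (A D : Matrix (Fin n) (Fin n) ℝ)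
    (hAsymm : Aᵀ = A) (hA01 : ∀ i j, A i j = 0 ∨ A i j = 1) (hAdiag : ∀ i, A i i = 0)
    (hD : D = Matrix.diagonal fun i => ∑ j, A i j)
    (hH : ∀ r : ℝ,
      ((r ^ 2 - 1) • (1 : Matrix (Fin n) (Fin n) ℝ) + D - r • A).IsHermitian)
    (rt : ℝ) (hrt : 1 < rt)
    (p : ℕ) (hp1 : 1 ≤ p) (hpn : p ≤ n)
    (X : Matrix (Fin n) (Fin p) ℝ) (hX : Xᵀ * X = 1)
    (heig : ∀ i : Fin p,
      ((rt ^ 2 - 1) • (1 : Matrix (Fin n) (Fin n) ℝ) + D - rt • A) *ᵥ (fun j => X j i)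
        = sortEig (hH rt) (Fin.castLE hpn i) • fun j => X j i) :
    ∀ r' : ℝ,
      rt * sortEig (hH r') ⟨p - 1, by omega⟩ ≤
        (r' - rt) * (1 + r' * rt) +
          lambdaMax ((rt - r') • (Xᵀ * D * X) +
            r' • Matrix.diagonal (fun i : Fin p => sortEig (hH rt) (Fin.castLE hpn i))) := by
  intro r'
  have hB : ((r' ^ 2 - 1) • (1 : Matrix (Fin n) (Fin n) ℝ) + D - r' • A).IsHermitian := hH r'
  set B : Matrix (Fin n) (Fin n) ℝ := (r' ^ 2 - 1) • 1 + D - r' • A with hBdef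
  set Hrt : Matrix (Fin n) (Fin n) ℝ := (rt ^ 2 - 1) • 1 + D - rt • A with hHrtdef
  set s' : Fin p → ℝ := fun i => sortEig (hH rt) (Fin.castLE hpn i) with hs'
  set Mmat : Matrix (Fin p) (Fin p) ℝ :=
    (rt - r') • (Xᵀ * D * X) + r' • Matrix.diagonal s' with hMmat
  set κ : ℝ := (r' - rt) * (1 + r' * rt) with hκ
  set q : Fin n := ⟨p - 1, by omega⟩ with hq
  -- orthonormality of eigenvectors of H(r') as dot products
  have horth : ∀ a b : Fin n,
      (⇑((hH r').eigenvectorBasis a) : Fin n → ℝ) ⬝ᵥ (⇑((hH r').eigenvectorBasis b) : Fin n → ℝ)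
        = if a = b then 1 else 0 := by
    intro a b
    have h := (Unitary.mem_iff.mp (hH r').eigenvectorUnitary.2).1
    have h2 := congrFun (congrFun h a) b
    simpa [Matrix.mul_apply, Matrix.star_apply, Matrix.one_apply, dotProduct] using h2
  -- the family of top eigenvectors
  set v : {i : Fin n // p - 1 ≤ i.val} → (Fin n → ℝ) :=
    fun i => ⇑((hH r').eigenvectorBasis (Tuple.sort (hH r').eigenvalues i.1)) with hv
  have horthv : ∀ a b : {i : Fin n // p - 1 ≤ i.val}, v a ⬝ᵥ v b = if a = b then 1 else 0 := by
    intro a b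
    rw [hv]; rw [horth]
    congr 1
    simp only [eq_iff_iff]
    exact ⟨fun h => Subtype.ext ((Tuple.sort (hH r').eigenvalues).injective h),
      fun h => by rw [h]⟩
  have hvind : LinearIndependent ℝ v := by
    rw [Fintype.linearIndependent_iff]
    intro c hc j
    have h1 : (∑ i, c i • v i) ⬝ᵥ v j = 0 := by rw [hc]; simp
    rw [sum_dot] at h1
    simp only [horthv, mul_ite, mul_one, mul_zero] at h1
    simpa using h1
  -- the family of columns of X
  set w : Fin p → (Fin n → ℝ) := fun i j => X j i with hw
  have hwind : LinearIndependent ℝ w := by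
    rw [Fintype.linearIndependent_iff]
    intro c hc j
    have hXc : X *ᵥ c = 0 := by
      ext a
      have := congrFun hc a
      simp only [Finset.sum_apply, Pi.smul_apply, smul_eq_mul, Pi.zero_apply] at this
      simp only [mulVec, dotProduct, Pi.zero_apply]
      rw [← this]
      exact Finset.sum_congr rfl fun i _ => by rw [hw]; ring
    have h2 : (Xᵀ * X) *ᵥ c = 0 := by rw [← Matrix.mulVec_mulVec, hXc, Matrix.mulVec_zero]
    rw [hX, one_mulVec] at h2
    exact congrFun h2 j
  -- dimensions
  have hcard : Fintype.card {i : Fin n // p - 1 ≤ i.val} = n - (p - 1) := by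
    rw [Fintype.card_congr
      (⟨fun i => (⟨i.1.1 - (p - 1), by have := i.1.2; omega⟩ : Fin (n - (p - 1))),
        fun j => ⟨⟨p - 1 + j.1, by have := j.2; omega⟩, by simp⟩,
        fun i => by ext; simp; have := i.2; omega,
        fun j => by ext; simp⟩ :
        {i : Fin n // p - 1 ≤ i.val} ≃ Fin (n - (p - 1)))]
    exact Fintype.card_fin _
  set V := Submodule.span ℝ (Set.range w) with hV
  set W := Submodule.span ℝ (Set.range v) with hW
  have hdimV : Module.finrank ℝ V = p := by
    rw [hV, finrank_span_eq_card hwind, Fintype.card_fin]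
  have hdimW : Module.finrank ℝ W = n - (p - 1) := by
    rw [hW, finrank_span_eq_card hvind, hcard]
  have hsum := Submodule.finrank_sup_add_finrank_inf_eq V W
  have hle : Module.finrank ℝ ↥(V ⊔ W) ≤ n :=
    le_trans (Submodule.finrank_le _) (le_of_eq (Module.finrank_fin_fun ℝ))
  have hpos : 0 < Module.finrank ℝ ↥(V ⊓ W) := by omega
  obtain ⟨x0, hx0⟩ := Module.finrank_pos_iff_exists_ne_zero.mp hpos
  set x : Fin n → ℝ := (x0 : Fin n → ℝ) with hx
  have hxne : x ≠ 0 := fun h => hx0 (Subtype.ext h)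
  have hxV : x ∈ V := x0.2.1
  have hxW : x ∈ W := x0.2.2
    -- Part (a): lower bound from membership in W
  obtain ⟨c, hc⟩ := (Submodule.mem_span_range_iff_exists_fun ℝ).mp hxW
  have hBv : ∀ i : {i : Fin n // p - 1 ≤ i.val},
      B *ᵥ v i = sortEig (hH r') i.1 • v i := fun i =>
    (hH r').mulVec_eigenvectorBasis _
  have haa : x ⬝ᵥ (B *ᵥ x) = ∑ i, sortEig (hH r') i.1 * (c i * c i) := by
    conv_lhs => rw [← hc]
    rw [mulVec_sum']
    simp only [hBv, smul_smul]
    rw [dot_sum]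
    simp only [sum_dot, horthv, mul_ite, mul_one, mul_zero, Finset.sum_ite_eq,
      Finset.sum_ite_eq', Finset.mem_univ, if_true]
    exact Finset.sum_congr rfl fun i _ => by ring
  have hxx : x ⬝ᵥ x = ∑ i, c i * c i := by
    conv_lhs => rw [← hc]
    rw [dot_sum]
    simp only [sum_dot, horthv, mul_ite, mul_one, mul_zero, Finset.sum_ite_eq,
      Finset.sum_ite_eq', Finset.mem_univ, if_true]
  have hmono : Monotone (sortEig (hH r')) := Tuple.monotone_sort (hH r').eigenvalues
  have ha : sortEig (hH r') q * (x ⬝ᵥ x) ≤ x ⬝ᵥ (B *ᵥ x) := by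
    rw [haa, hxx, Finset.mul_sum]
    refine Finset.sum_le_sum fun i _ => mul_le_mul_of_nonneg_right (hmono ?_) (mul_self_nonneg _)
    exact i.2
  -- Part (b): membership in V
  obtain ⟨cv, hcv⟩ := (Submodule.mem_span_range_iff_exists_fun ℝ).mp hxV
  have hxc : x = X *ᵥ cv := by
    rw [← hcv]; ext a
    simp only [mulVec, dotProduct, Finset.sum_apply, Pi.smul_apply, smul_eq_mul]
    exact Finset.sum_congr rfl fun i _ => by rw [hw]; ring
  have hHX : Hrt * X = X * Matrix.diagonal s' := by
    ext k j
    have h := congrFun (heig j) k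
    simp only [Pi.smul_apply, smul_eq_mul] at h
    rw [Matrix.mul_apply, Matrix.mul_diagonal,
      show ∑ l, Hrt k l * X l j = (Hrt *ᵥ fun a => X a j) k from rfl, h]
    ring
  have hS : Xᵀ * Hrt * X = Matrix.diagonal s' := by
    rw [Matrix.mul_assoc, hHX, ← Matrix.mul_assoc, hX, one_mul]
  have hexp : ∀ r : ℝ, Xᵀ * ((r ^ 2 - 1) • (1 : Matrix (Fin n) (Fin n) ℝ) + D - r • A) * X
      = (r ^ 2 - 1) • (1 : Matrix (Fin p) (Fin p) ℝ) + Xᵀ * D * X - r • (Xᵀ * A * X) := by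
    intro r
    simp only [Matrix.mul_sub, Matrix.sub_mul, Matrix.mul_add, Matrix.add_mul,
      Matrix.mul_smul, Matrix.smul_mul, Matrix.mul_one, hX, Matrix.mul_assoc]
  have hQ : rt • (Xᵀ * A * X)
      = (rt ^ 2 - 1) • (1 : Matrix (Fin p) (Fin p) ℝ) + Xᵀ * D * X - Matrix.diagonal s' := by
    have h := hS
    rw [hHrtdef, hexp rt] at h
    rw [← h]; abel
  have hkey : rt • (Xᵀ * B * X) = κ • (1 : Matrix (Fin p) (Fin p) ℝ) + Mmat := by
    rw [hBdef, hexp r', hMmat, hκ, smul_sub, smul_add, smul_comm rt r', hQ]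
    module
  have hb1 : x ⬝ᵥ (B *ᵥ x) = cv ⬝ᵥ ((Xᵀ * B * X) *ᵥ cv) := by
    conv_rhs => rw [← Matrix.mulVec_mulVec, ← Matrix.mulVec_mulVec, dot_tmul Xᵀ,
      transpose_transpose]
    rw [hxc]
  have hcc : cv ⬝ᵥ cv = x ⬝ᵥ x := by
    have h1 : cv ⬝ᵥ cv = cv ⬝ᵥ ((Xᵀ * X) *ᵥ cv) := by rw [hX, one_mulVec]
    rw [h1, ← Matrix.mulVec_mulVec, dot_tmul, transpose_transpose, ← hxc]
  have hrtb : rt * (x ⬝ᵥ (B *ᵥ x)) = κ * (x ⬝ᵥ x) + cv ⬝ᵥ (Mmat *ᵥ cv) := by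
    rw [hb1, ← smul_eq_mul, ← dotProduct_smul, ← smul_mulVec, hkey, add_mulVec,
      smul_mulVec, one_mulVec, dotProduct_add, dotProduct_smul, smul_eq_mul, hcc]
  have hDt : Dᵀ = D := by rw [hD]; exact Matrix.diagonal_transpose _
  have hPt : (Xᵀ * D * X)ᵀ = Xᵀ * D * X := by
    rw [Matrix.transpose_mul, Matrix.transpose_mul, transpose_transpose, hDt, Matrix.mul_assoc]
  have hMt : Mmatᵀ = Mmat := by
    rw [hMmat, Matrix.transpose_add, Matrix.transpose_smul, Matrix.transpose_smul, hPt,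
      Matrix.diagonal_transpose]
  have hMh : Mmat.IsHermitian := by
    rw [Matrix.IsHermitian]
    ext i j
    rw [Matrix.conjTranspose_apply, star_trivial]
    exact (congrFun (congrFun hMt j) i).symm
  have hray := rayleigh_le_lambdaMax (show 0 < p by omega) hMh cv
  have hxxpos : 0 < x ⬝ᵥ x := dot_self_pos hxne
  have main : (rt * sortEig (hH r') q) * (x ⬝ᵥ x) ≤ (κ + lambdaMax Mmat) * (x ⬝ᵥ x) := by
    have h1 : rt * (sortEig (hH r') q * (x ⬝ᵥ x)) ≤ rt * (x ⬝ᵥ (B *ᵥ x)) :=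
      mul_le_mul_of_nonneg_left ha (by linarith)
    have h2 : cv ⬝ᵥ (Mmat *ᵥ cv) ≤ lambdaMax Mmat * (x ⬝ᵥ x) := by
      rw [← hcc]; exact hray
    calc (rt * sortEig (hH r') q) * (x ⬝ᵥ x) = rt * (sortEig (hH r') q * (x ⬝ᵥ x)) := by ring
      _ ≤ rt * (x ⬝ᵥ (B *ᵥ x)) := h1
      _ = κ * (x ⬝ᵥ x) + cv ⬝ᵥ (Mmat *ᵥ cv) := hrtb
      _ ≤ κ * (x ⬝ᵥ x) + lambdaMax Mmat * (x ⬝ᵥ x) := by linarith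
      _ = (κ + lambdaMax Mmat) * (x ⬝ᵥ x) := by ring
  exact le_of_mul_le_mul_right main hxxpos
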